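/- Let O be an ordering of a weighted brick complex with level surfaces S_j, and suppose A = O⁻¹(i) and B = O⁻¹(i+1) are both shortening moves for S_i that share no facets (∂A ⊓ ∂B = ∅). Then the ordering O' = τ_i ∘ O obtained by swapping them satisfies Ω(O') ≤ Ω(O). -/

import Mathlib

open Finset

/-- The total weight of a set of facets. -/
def wt {Facet : Type} [DecidableEq Facet] (ω : Facet → ℝ) (S : Finset Facet) : ℝ :=
  ∑ f ∈ S, ω f

/-- The strength σ(A;S) of a brick with set of interior facets `intA`
relative to a surface `S`:  ω(∂'_S A) − ω(∂_S A). -/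
def strength {Facet : Type} [DecidableEq Facet] (ω : Facet → ℝ) (intA S : Finset Facet) : ℝ :=
  wt ω (intA \ S) - wt ω (intA ∩ S)

/-- A surface (set of facets) is proper if none of its facets lies in ∂M and every
(n−2)-face not in ∂M is contained in an even number of its facets. -/
def ProperSurf {Facet Face : Type} [DecidableEq Facet] [DecidableEq Face]
    (bdF : Finset Facet) (facesOf : Facet → Finset Face) (bdE : Finset Face)
    (S : Finset Facet) : Prop :=
  (∀ f ∈ S, f ∉ bdF) ∧
  ∀ e : Face, e ∉ bdE → Even ((S.filter (fun f => e ∈ facesOf f)).card)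

/-- The interior facets ∂_I A of a brick `A`: facets incident to exactly two bricks,
one of which is `A`. -/
def intFacets {Brick Facet : Type} [DecidableEq Brick] [Fintype Facet] [DecidableEq Facet]
    (bricksOf : Facet → Finset Brick) (A : Brick) : Finset Facet :=
  univ.filter (fun f => A ∈ bricksOf f ∧ (bricksOf f).card = 2)

/-- The facets shared by two bricks `A` and `B` (∂A ⊓ ∂B). -/
def commonFacets {Brick Facet : Type} [DecidableEq Brick] [Fintype Facet] [DecidableEq Facet]
    (bricksOf : Facet → Finset Brick) (A B : Brick) : Finset Facet :=
  univ.filter (fun f => A ∈ bricksOf f ∧ B ∈ bricksOf f)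

/-- `A` is a shortening move for `S` (given interior facets `intA` of `A`):
it meets `S` and σ(A;S) ≤ 0. -/
def ShortMove {Facet : Type} [DecidableEq Facet] (ω : Facet → ℝ) (intA S : Finset Facet) : Prop :=
  (intA ∩ S).Nonempty ∧ strength ω intA S ≤ 0

/-- `A` is a strict shortening move for `S`: it meets `S` and σ(A;S) < 0. -/
def StrictShort {Facet : Type} [DecidableEq Facet] (ω : Facet → ℝ) (intA S : Finset Facet) : Prop :=
  (intA ∩ S).Nonempty ∧ strength ω intA S < 0

/-- The sublevel set M_j of an ordering: the bricks at heights 1,…,j. -/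
def sublevel {Brick : Type} [Fintype Brick] [DecidableEq Brick] {N : ℕ}
    (O : Fin N ≃ Brick) (j : ℕ) : Finset Brick :=
  univ.filter (fun T => ((O.symm T : Fin N) : ℕ) + 1 ≤ j)

/-- The level surface S_j at height j: facets shared between a brick of M_j and a
brick not in M_j. -/
def levelSurf {Brick Facet : Type} [Fintype Brick] [DecidableEq Brick]
    [Fintype Facet] [DecidableEq Facet]
    (bricksOf : Facet → Finset Brick) {N : ℕ} (O : Fin N ≃ Brick) (j : ℕ) : Finset Facet :=
  univ.filter (fun f => (∃ T ∈ bricksOf f, T ∈ sublevel O j) ∧ ∃ T ∈ bricksOf f, T ∉ sublevel O j)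

/-- Λ(j): the weight of the level surface at height j. -/
def Lam {Brick Facet : Type} [Fintype Brick] [DecidableEq Brick]
    [Fintype Facet] [DecidableEq Facet] (ω : Facet → ℝ)
    (bricksOf : Facet → Finset Brick) {N : ℕ} (O : Fin N ≃ Brick) (j : ℕ) : ℝ :=
  wt ω (levelSurf bricksOf O j)

/-- `t` is a (local) maximum of the ordering with level-weight function Λ. -/
def IsMaxAt (N : ℕ) (Λ : ℕ → ℝ) (t : ℕ) : Prop :=
  ∃ tm tp : ℕ, tm < t ∧ t < tp ∧ tp ≤ N ∧
    Λ tm < Λ (tm + 1) ∧ Λ tp < Λ (tp - 1) ∧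
    ∀ k, tm < k → k < tp → Λ k = Λ t

open Classical in
/-- The width Ω of an ordering: the values of Λ at its maxima, arranged in
non-increasing order. -/
noncomputable def widthList (N : ℕ) (Λ : ℕ → ℝ) : List ℝ :=
  ((((Finset.range (N + 1)).filter (fun t => IsMaxAt N Λ t)).val.map Λ).sort (· ≤ ·)).reverse

/-- Strict lexicographic comparison of widths. -/
def WidthLT (l₁ l₂ : List ℝ) : Prop := List.Lex (· < ·) l₁ l₂

/-- Lexicographic comparison of widths. -/
def WidthLE (l₁ l₂ : List ℝ) : Prop := WidthLT l₁ l₂ ∨ l₁ = l₂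

-- ## list lemmas

lemma lex_trichotomy : ∀ (L L' : List ℝ), List.Lex (· < ·) L L' ∨ L = L' ∨ List.Lex (· < ·) L' L
  | [], [] => Or.inr (Or.inl rfl)
  | [], _ :: _ => Or.inl List.Lex.nil
  | _ :: _, [] => Or.inr (Or.inr List.Lex.nil)
  | a :: l, b :: m => by
    rcases lt_trichotomy a b with h | h | h
    · exact Or.inl (List.Lex.rel h)
    · subst h
      rcases lex_trichotomy l m with h | h | h
      · exact Or.inl (List.Lex.cons h)
      · exact Or.inr (Or.inl (by rw [h]))
      · exact Or.inr (Or.inr (List.Lex.cons h))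
    · exact Or.inr (Or.inr (List.Lex.rel h))

lemma lexChar : ∀ (L L' : List ℝ), L.Pairwise (· ≥ ·) → L'.Pairwise (· ≥ ·) →
    List.Lex (· < ·) L L' →
    ∃ v : ℝ, (L : Multiset ℝ).filter (fun x => v ≤ x) < (L' : Multiset ℝ).filter (fun x => v ≤ x)
  | L, L', hL, hL', h => by
    induction h with
    | @nil b t =>
      refine ⟨b, ?_⟩
      have hb : b ∈ Multiset.filter (fun x => b ≤ x) (↑(b :: t) : Multiset ℝ) :=
        Multiset.mem_filter.2 ⟨by simp, le_refl b⟩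
      have h0 : ((([] : List ℝ)) : Multiset ℝ).filter (fun x => b ≤ x) = 0 := by simp
      rw [h0]
      exact lt_of_le_of_ne (Multiset.zero_le _) (fun h => by rw [← h] at hb; simp at hb)
    | @cons a l m h ih =>
      obtain ⟨v, hv⟩ := ih hL.of_cons hL'.of_cons
      refine ⟨v, ?_⟩
      rw [← Multiset.cons_coe, ← Multiset.cons_coe]
      by_cases hva : v ≤ a
      · rw [Multiset.filter_cons_of_pos _ hva, Multiset.filter_cons_of_pos _ hva]
        exact Multiset.cons_lt_cons a hv
      · rw [Multiset.filter_cons_of_neg _ hva, Multiset.filter_cons_of_neg _ hva]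
        exact hv
    | @rel a l b m hab =>
      refine ⟨b, ?_⟩
      have h0 : ((a :: l : List ℝ) : Multiset ℝ).filter (fun x => b ≤ x) = 0 := by
        rw [Multiset.filter_eq_nil]
        intro x hx
        have hxa : x ≤ a := by
          rcases Multiset.mem_coe.1 hx with hx
          rcases List.mem_cons.1 hx with h | h
          · exact le_of_eq h
          · exact List.rel_of_pairwise_cons hL h
        exact not_le.2 (lt_of_le_of_lt hxa hab)
      have hb : b ∈ ((b :: m : List ℝ) : Multiset ℝ).filter (fun x => b ≤ x) :=
        Multiset.mem_filter.2 ⟨by simp, le_refl b⟩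
      rw [h0]
      exact lt_of_le_of_ne (Multiset.zero_le _) (fun h => by rw [← h] at hb; simp at hb)

lemma widthList_sorted (N : ℕ) (Λ : ℕ → ℝ) : (widthList N Λ).Pairwise (· ≥ ·) := by
  unfold widthList
  rw [List.pairwise_reverse]
  exact Multiset.pairwise_sort _ (· ≤ ·)

open Classical in
lemma widthList_coe (N : ℕ) (Λ : ℕ → ℝ) :
    ((widthList N Λ : List ℝ) : Multiset ℝ)
      = ((Finset.range (N + 1)).filter (fun t => IsMaxAt N Λ t)).val.map Λ := by
  simp [widthList, Multiset.coe_reverse, Multiset.sort_eq]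

-- ## maxima analysis

def Wit (N : ℕ) (Λ : ℕ → ℝ) (t tm tp : ℕ) : Prop :=
  tm < t ∧ t < tp ∧ tp ≤ N ∧ Λ tm < Λ t ∧ Λ tp < Λ t ∧ ∀ k, tm < k → k < tp → Λ k = Λ t

lemma isMaxAt_iff {N : ℕ} {Λ : ℕ → ℝ} {t : ℕ} :
    IsMaxAt N Λ t ↔ ∃ tm tp, Wit N Λ t tm tp := by
  constructor
  · rintro ⟨tm, tp, h1, h2, h3, h4, h5, h6⟩
    refine ⟨tm, tp, h1, h2, h3, ?_, ?_, h6⟩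
    · have h := h6 (tm + 1) (by omega) (by omega); rwa [h] at h4
    · have h := h6 (tp - 1) (by omega) (by omega); rwa [h] at h5
  · rintro ⟨tm, tp, h1, h2, h3, h4, h5, h6⟩
    refine ⟨tm, tp, h1, h2, h3, ?_, ?_, h6⟩
    · rwa [h6 (tm + 1) (by omega) (by omega)]
    · rwa [h6 (tp - 1) (by omega) (by omega)]

lemma wit_congr {N : ℕ} {Λ Λ' : ℕ → ℝ} {t tm tp : ℕ}
    (h : ∀ x, tm ≤ x → x ≤ tp → Λ' x = Λ x) (hw : Wit N Λ' t tm tp) : Wit N Λ t tm tp := by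
  obtain ⟨w1, w2, w3, w4, w5, w6⟩ := hw
  have ht := h t (by omega) (by omega)
  refine ⟨w1, w2, w3, ?_, ?_, ?_⟩
  · rw [← h tm le_rfl (by omega), ← ht]; exact w4
  · rw [← h tp (by omega) le_rfl, ← ht]; exact w5
  · intro k hk1 hk2; rw [← h k (by omega) (by omega), ← ht]; exact w6 k hk1 hk2

section Key
variable {N t₀ : ℕ} {Λ Λ' : ℕ → ℝ} {p s : ℝ}

lemma max_transfer (h1 : 1 ≤ t₀) (h2 : t₀ + 1 ≤ N)
    (hoff : ∀ j, j ≠ t₀ → Λ' j = Λ j) (hp : 0 ≤ p) (hs : s ≤ 0)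
    (hb : Λ t₀ = Λ (t₀ - 1) + p) (hb' : Λ' t₀ = Λ (t₀ - 1) + s)
    (hc : Λ (t₀ + 1) = Λ (t₀ - 1) + p + s) (hD : s < p)
    {t : ℕ} (ht : t ≠ t₀) (hm : IsMaxAt N Λ' t) (hv : Λ t₀ ≤ Λ t) : IsMaxAt N Λ t := by
  obtain ⟨tm, tp, w1, w2, w3, w4, w5, w6⟩ := isMaxAt_iff.1 hm
  have hvt : Λ' t = Λ t := hoff t ht
  rcases lt_trichotomy t₀ tm with hA | hA | hA
  · exact isMaxAt_iff.2 ⟨tm, tp,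
      wit_congr (fun x hx1 hx2 => hoff x (by omega)) ⟨w1, w2, w3, w4, w5, w6⟩⟩
  · subst hA
    have e1 : Λ' (t₀ + 1) = Λ' t := by
      rcases eq_or_ne (t₀ + 1) t with h | h
      · rw [h]
      · exact w6 _ (by omega) (by omega)
    have e2 : Λ' (t₀ + 1) = Λ (t₀ + 1) := hoff _ (by omega)
    have hveq : Λ t = Λ (t₀ - 1) + p + s := by rw [← hvt, ← e1, e2, hc]
    have hs0 : s = 0 := by linarith
    have hp0 : 0 < p := by linarith
    refine isMaxAt_iff.2 ⟨t₀ - 1, tp, ⟨by omega, by omega, w3, ?_, ?_, ?_⟩⟩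
    · rw [hveq]; linarith
    · rw [← hoff tp (by omega), ← hvt]; exact w5
    · intro k hk1 hk2
      rcases eq_or_ne k t₀ with hk | hk
      · rw [hk, hb, hveq, hs0, add_zero]
      · rw [← hoff k (by omega), ← hvt]; exact w6 k (by omega) hk2
  · rcases lt_trichotomy tp t₀ with hB | hB | hB
    · exact isMaxAt_iff.2 ⟨tm, tp,
        wit_congr (fun x hx1 hx2 => hoff x (by omega)) ⟨w1, w2, w3, w4, w5, w6⟩⟩
    · subst hB
      have e1 : Λ' (tp - 1) = Λ' t := by
        rcases eq_or_ne (tp - 1) t with h | h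
        · rw [h]
        · exact w6 _ (by omega) (by omega)
      have e2 : Λ' (tp - 1) = Λ (tp - 1) := hoff _ (by omega)
      have hveq : Λ t = Λ (tp - 1) := by rw [← hvt, ← e1, e2]
      have hp0 : p = 0 := by linarith
      have hs0 : s < 0 := by linarith
      refine isMaxAt_iff.2 ⟨tm, tp + 1, ⟨w1, by omega, by omega, ?_, ?_, ?_⟩⟩
      · rw [← hoff tm (by omega), ← hvt]; exact w4
      · rw [hc, hveq, hp0]; linarith
      · intro k hk1 hk2
        rcases eq_or_ne k tp with hk | hk
        · rw [hk, hb, hveq, hp0, add_zero]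
        · rw [← hoff k hk, ← hvt]; exact w6 k hk1 (by omega)
    · exfalso
      have h0 := w6 t₀ hA hB
      have hx : Λ t = Λ (t₀ - 1) + s := by rw [← hvt, ← h0, hb']
      linarith

lemma notmax_t0 (h1 : 1 ≤ t₀) (h2 : t₀ + 1 ≤ N)
    (hoff : ∀ j, j ≠ t₀ → Λ' j = Λ j) (hp : 0 ≤ p) (hs : s ≤ 0)
    (hb : Λ t₀ = Λ (t₀ - 1) + p) (hb' : Λ' t₀ = Λ (t₀ - 1) + s)
    (hc : Λ (t₀ + 1) = Λ (t₀ - 1) + p + s) (hD : s < p) : ¬ IsMaxAt N Λ' t₀ := by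
  intro hm
  obtain ⟨tm, tp, w1, w2, w3, w4, w5, w6⟩ := isMaxAt_iff.1 hm
  rcases hp.lt_or_eq with hppos | hpz
  · have htp : t₀ + 1 ≤ tp := by omega
    have e : Λ' (t₀ + 1) = Λ (t₀ + 1) := hoff _ (by omega)
    rcases htp.lt_or_eq with h | h
    · have h6 := w6 (t₀ + 1) (by omega) h
      linarith
    · rw [← h] at w5
      linarith
  · have hsneg : s < 0 := by linarith
    have htm : tm ≤ t₀ - 1 := by omega
    have e : Λ' (t₀ - 1) = Λ (t₀ - 1) := hoff _ (by omega)
    rcases htm.lt_or_eq with h | h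
    · have h6 := w6 (t₀ - 1) h (by omega)
      linarith
    · rw [h] at w4
      linarith

lemma degA (h1 : 1 ≤ t₀) (h2 : t₀ + 1 ≤ N)
    (hoff : ∀ j, j ≠ t₀ → Λ' j = Λ j) (hp : 0 ≤ p) (hs : s ≤ 0)
    (hb : Λ t₀ = Λ (t₀ - 1) + p) (hb' : Λ' t₀ = Λ (t₀ - 1) + s)
    (hc : Λ (t₀ + 1) = Λ (t₀ - 1) + p + s) (hD : s < p)
    (hnmax : ¬ IsMaxAt N Λ t₀) {t : ℕ} (ht : t ≠ t₀) (hm : IsMaxAt N Λ' t) :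
    IsMaxAt N Λ t := by
  obtain ⟨tm, tp, w1, w2, w3, w4, w5, w6⟩ := isMaxAt_iff.1 hm
  have hvt : Λ' t = Λ t := hoff t ht
  have hdeg : p = 0 ∨ s = 0 := by
    by_contra hcon
    push_neg at hcon
    have hppos : 0 < p := lt_of_le_of_ne hp (Ne.symm hcon.1)
    have hsneg : s < 0 := lt_of_le_of_ne hs hcon.2
    apply hnmax
    refine isMaxAt_iff.2 ⟨t₀ - 1, t₀ + 1, ⟨by omega, by omega, h2, ?_, ?_, ?_⟩⟩
    · rw [hb]; linarith
    · rw [hc, hb]; linarith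
    · intro k hk1 hk2
      have : k = t₀ := by omega
      rw [this]
  rcases lt_trichotomy t₀ tm with hA | hA | hA
  · exact isMaxAt_iff.2 ⟨tm, tp,
      wit_congr (fun x hx1 hx2 => hoff x (by omega)) ⟨w1, w2, w3, w4, w5, w6⟩⟩
  · subst hA
    have e1 : Λ' (t₀ + 1) = Λ' t := by
      rcases eq_or_ne (t₀ + 1) t with h | h
      · rw [h]
      · exact w6 _ (by omega) (by omega)
    have e2 : Λ' (t₀ + 1) = Λ (t₀ + 1) := hoff _ (by omega)
    have hppos : 0 < p := by linarith
    have hs0 : s = 0 := hdeg.resolve_left (by linarith)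
    exfalso; apply hnmax
    refine isMaxAt_iff.2 ⟨t₀ - 1, tp, ⟨by omega, by omega, w3, ?_, ?_, ?_⟩⟩
    · rw [hb]; linarith
    · have e3 : Λ' tp = Λ tp := hoff tp (by omega)
      rw [hb]; linarith
    · intro k hk1 hk2
      rcases eq_or_ne k t₀ with hk | hk
      · rw [hk]
      · have ek : Λ' k = Λ k := hoff k (by omega)
        have e6 := w6 k (by omega) hk2
        linarith [hb]
  · rcases lt_trichotomy tp t₀ with hB | hB | hB
    · exact isMaxAt_iff.2 ⟨tm, tp,
        wit_congr (fun x hx1 hx2 => hoff x (by omega)) ⟨w1, w2, w3, w4, w5, w6⟩⟩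
    · subst hB
      have e1 : Λ' (tp - 1) = Λ' t := by
        rcases eq_or_ne (tp - 1) t with h | h
        · rw [h]
        · exact w6 _ (by omega) (by omega)
      have e2 : Λ' (tp - 1) = Λ (tp - 1) := hoff _ (by omega)
      have hsneg : s < 0 := by linarith
      have hp0 : p = 0 := hdeg.resolve_right (by linarith)
      exfalso; apply hnmax
      refine isMaxAt_iff.2 ⟨tm, tp + 1, ⟨by omega, by omega, h2, ?_, ?_, ?_⟩⟩
      · have e3 : Λ' tm = Λ tm := hoff tm (by omega)
        rw [hb]; linarith
      · rw [hc, hb]; linarith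
      · intro k hk1 hk2
        rcases eq_or_ne k tp with hk | hk
        · rw [hk]
        · have ek : Λ' k = Λ k := hoff k hk
          have e6 := w6 k hk1 (by omega)
          linarith [hb, hp0]
    · exfalso
      have h0 := w6 t₀ hA hB
      rcases hdeg with hp0 | hs0
      · have hsneg : s < 0 := by linarith
        rcases lt_trichotomy tm (t₀ - 1) with hC | hC | hC
        · have h6 := w6 (t₀ - 1) hC (by omega)
          have e2 : Λ' (t₀ - 1) = Λ (t₀ - 1) := hoff _ (by omega)
          linarith
        · have e2 : Λ' (t₀ - 1) = Λ (t₀ - 1) := hoff _ (by omega)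
          have e3 : Λ' tm = Λ (t₀ - 1) := by rw [hC]; exact e2
          linarith
        · omega
      · have hppos : 0 < p := by linarith
        rcases lt_trichotomy (t₀ + 1) tp with hC | hC | hC
        · have h6 := w6 (t₀ + 1) (by omega) hC
          have e2 : Λ' (t₀ + 1) = Λ (t₀ + 1) := hoff _ (by omega)
          linarith
        · have e2 : Λ' (t₀ + 1) = Λ (t₀ + 1) := hoff _ (by omega)
          have e3 : Λ' tp = Λ (t₀ + 1) := by rw [← hC]; exact e2
          linarith
        · omega

lemma degB (h1 : 1 ≤ t₀) (h2 : t₀ + 1 ≤ N)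
    (hoff : ∀ j, j ≠ t₀ → Λ' j = Λ j) (hp : 0 ≤ p) (hs : s ≤ 0)
    (hb : Λ t₀ = Λ (t₀ - 1) + p) (hb' : Λ' t₀ = Λ (t₀ - 1) + s)
    (hc : Λ (t₀ + 1) = Λ (t₀ - 1) + p + s)
    (hnmax : ¬ IsMaxAt N Λ t₀) {t : ℕ} (ht : t ≠ t₀) (hm : IsMaxAt N Λ t) :
    IsMaxAt N Λ' t := by
  obtain ⟨tm, tp, w1, w2, w3, w4, w5, w6⟩ := isMaxAt_iff.1 hm
  have hvt : Λ' t = Λ t := hoff t ht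
  rcases lt_trichotomy t₀ tm with hA | hA | hA
  · exact isMaxAt_iff.2 ⟨tm, tp,
      wit_congr (fun x hx1 hx2 => (hoff x (by omega)).symm) ⟨w1, w2, w3, w4, w5, w6⟩⟩
  · subst hA
    have e1 : Λ (t₀ + 1) = Λ t := by
      rcases eq_or_ne (t₀ + 1) t with h | h
      · rw [h]
      · exact w6 _ (by omega) (by omega)
    exfalso; linarith
  · rcases lt_trichotomy tp t₀ with hB | hB | hB
    · exact isMaxAt_iff.2 ⟨tm, tp,
        wit_congr (fun x hx1 hx2 => (hoff x (by omega)).symm) ⟨w1, w2, w3, w4, w5, w6⟩⟩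
    · subst hB
      have e1 : Λ (tp - 1) = Λ t := by
        rcases eq_or_ne (tp - 1) t with h | h
        · rw [h]
        · exact w6 _ (by omega) (by omega)
      exfalso; linarith
    · exfalso; apply hnmax
      have h0 := w6 t₀ hA hB
      exact isMaxAt_iff.2 ⟨tm, tp, ⟨hA, hB, w3, by rw [h0]; exact w4, by rw [h0]; exact w5,
        fun k hk1 hk2 => by rw [h0]; exact w6 k hk1 hk2⟩⟩

end Key

open Classical in
theorem width_key (N t₀ : ℕ) (Λ Λ' : ℕ → ℝ) (h1 : 1 ≤ t₀) (h2 : t₀ + 1 ≤ N)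
    (hoff : ∀ j, j ≠ t₀ → Λ' j = Λ j) (p s : ℝ) (hp : 0 ≤ p) (hs : s ≤ 0)
    (hb : Λ t₀ = Λ (t₀ - 1) + p) (hb' : Λ' t₀ = Λ (t₀ - 1) + s)
    (hc : Λ (t₀ + 1) = Λ (t₀ - 1) + p + s) :
    WidthLE (widthList N Λ') (widthList N Λ) := by
  by_cases hD : s < p
  · -- main case
    by_cases hmax : IsMaxAt N Λ t₀
    · -- t₀ is a maximum of Λ
      rcases lex_trichotomy (widthList N Λ') (widthList N Λ) with hl | hl | hl
      · exact Or.inl hl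
      · exact Or.inr hl
      · exfalso
        obtain ⟨v, hv⟩ := lexChar _ _ (widthList_sorted N Λ) (widthList_sorted N Λ') hl
        rw [widthList_coe, widthList_coe] at hv
        set F := (Finset.range (N + 1)).filter (fun t => IsMaxAt N Λ t) with hF
        set F' := (Finset.range (N + 1)).filter (fun t => IsMaxAt N Λ' t) with hF'
        have hb'lt : Λ' t₀ < Λ t₀ := by rw [hb, hb']; linarith
        rcases le_or_gt v (Λ t₀) with hvb | hvb
        · -- v ≤ b : compare counts at value b = Λ t₀
          have hcnt := Multiset.count_le_of_le (Λ t₀) hv.le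
          rw [Multiset.count_filter_of_pos hvb, Multiset.count_filter_of_pos hvb,
            Multiset.count_map, Multiset.count_map] at hcnt
          rw [← Finset.filter_val, ← Finset.filter_val] at hcnt
          set G := F.filter (fun t => Λ t₀ = Λ t) with hG
          set G' := F'.filter (fun t => Λ t₀ = Λ' t) with hG'
          have hsub : G' ⊆ G.erase t₀ := by
            intro t htG'
            obtain ⟨htF', hteq⟩ := Finset.mem_filter.1 htG'
            obtain ⟨htr, htmax'⟩ := Finset.mem_filter.1 htF'
            have htne : t ≠ t₀ := by
              intro h; rw [h] at hteq; rw [← hteq] at hb'lt; exact lt_irrefl _ hb'lt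
            have hte : Λ' t = Λ t := hoff t htne
            have hmt : IsMaxAt N Λ t :=
              max_transfer h1 h2 hoff hp hs hb hb' hc hD htne htmax'
                (le_of_eq (by rw [← hte]; exact hteq))
            exact Finset.mem_erase.2 ⟨htne,
              Finset.mem_filter.2 ⟨Finset.mem_filter.2 ⟨htr, hmt⟩, by rw [hteq, hte]⟩⟩
          have ht0G : t₀ ∈ G :=
            Finset.mem_filter.2 ⟨Finset.mem_filter.2 ⟨Finset.mem_range.2 (by omega), hmax⟩, rfl⟩
          have hlt : G'.card < G.card :=
            lt_of_le_of_lt (Finset.card_le_card hsub) (Finset.card_erase_lt_of_mem ht0G)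
          have hcard : (G.val.card : ℕ) ≤ G'.val.card := hcnt
          exact absurd hcard (by
            have e1 : G.val.card = G.card := rfl
            have e2 : G'.val.card = G'.card := rfl
            rw [e1, e2]; omega)
        · -- b < v : the filtered multiset for Λ' is ≤ that of Λ
          have hM'le : (F'.val.map Λ').filter (fun x => v ≤ x)
              ≤ (F.val.map Λ).filter (fun x => v ≤ x) := by
            apply Multiset.le_iff_count.2
            intro x
            by_cases hx : v ≤ x
            · rw [Multiset.count_filter_of_pos hx, Multiset.count_filter_of_pos hx,
                Multiset.count_map, Multiset.count_map, ← Finset.filter_val, ← Finset.filter_val]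
              apply Multiset.card_le_card
              apply Finset.val_le_iff.2
              intro t htG'
              obtain ⟨htF', hteq⟩ := Finset.mem_filter.1 htG'
              obtain ⟨htr, htmax'⟩ := Finset.mem_filter.1 htF'
              have htne : t ≠ t₀ := by
                intro h; rw [h] at hteq; linarith
              have hte : Λ' t = Λ t := hoff t htne
              have hmt : IsMaxAt N Λ t :=
                max_transfer h1 h2 hoff hp hs hb hb' hc hD htne htmax'
                  (by rw [← hte, ← hteq]; linarith)
              exact Finset.mem_filter.2 ⟨Finset.mem_filter.2 ⟨htr, hmt⟩, by rw [hteq, hte]⟩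
            · rw [Multiset.count_filter_of_neg hx, Multiset.count_filter_of_neg hx]
          exact absurd (lt_of_lt_of_le hv hM'le) (lt_irrefl _)
    · -- degenerate : maxima are unchanged
      right
      apply List.Perm.eq_of_pairwise' (widthList_sorted N Λ') (widthList_sorted N Λ) ?_
      apply Multiset.coe_eq_coe.1
      rw [widthList_coe, widthList_coe]
      have hFeq : (Finset.range (N + 1)).filter (fun t => IsMaxAt N Λ' t)
          = (Finset.range (N + 1)).filter (fun t => IsMaxAt N Λ t) := by
        apply Finset.ext
        intro t
        simp only [Finset.mem_filter, Finset.mem_range]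
        constructor
        · rintro ⟨ht1, ht2⟩
          rcases eq_or_ne t t₀ with h | h
          · rw [h] at ht2
            exact absurd ht2 (notmax_t0 h1 h2 hoff hp hs hb hb' hc hD)
          · exact ⟨ht1, degA h1 h2 hoff hp hs hb hb' hc hD hmax h ht2⟩
        · rintro ⟨ht1, ht2⟩
          rcases eq_or_ne t t₀ with h | h
          · rw [h] at ht2; exact absurd ht2 hmax
          · exact ⟨ht1, degB h1 h2 hoff hp hs hb hb' hc hmax h ht2⟩
      rw [hFeq]
      apply Multiset.map_congr rfl
      intro t ht
      apply hoff
      intro h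
      rw [h] at ht
      exact hmax (Finset.mem_filter.1 (Finset.mem_val.mp ht)).2
  · -- p = s = 0 : the functions agree
    push_neg at hD
    have hp0 : p = 0 := le_antisymm (by linarith) hp
    have hs0 : s = 0 := le_antisymm hs (by linarith)
    have hΛ : Λ' = Λ := funext fun j => by
      rcases eq_or_ne j t₀ with h | h
      · rw [h, hb', hb, hp0, hs0]
      · exact hoff j h
    rw [hΛ]
    exact Or.inr rfl


open scoped symmDiff

section Geometry
variable {Brick Facet : Type} [Fintype Brick] [DecidableEq Brick]
  [Fintype Facet] [DecidableEq Facet]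
variable (ω : Facet → ℝ) (bricksOf : Facet → Finset Brick)

lemma wt_split (S I : Finset Facet) : wt ω S = wt ω (S \ I) + wt ω (S ∩ I) := by
  rw [wt, wt, wt, ← Finset.sdiff_inter_self_left S I]
  exact (Finset.sum_sdiff Finset.inter_subset_left).symm

lemma wt_symmDiff (S I : Finset Facet) : wt ω (S ∆ I) = wt ω S + strength ω I S := by
  have hd : Disjoint (S \ I) (I \ S) := disjoint_sdiff_sdiff
  have h1 : wt ω (S ∆ I) = wt ω (S \ I) + wt ω (I \ S) := by
    rw [symmDiff_def, Finset.sup_eq_union, wt, Finset.sum_union hd]; rfl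
  have h2 := wt_split ω S I
  have h3 : wt ω (S ∩ I) = wt ω (I ∩ S) := by rw [Finset.inter_comm]
  rw [strength]
  linarith

lemma mem_sublevel {N : ℕ} {O : Fin N ≃ Brick} {j : ℕ} {T : Brick} :
    T ∈ sublevel O j ↔ ((O.symm T : Fin N) : ℕ) + 1 ≤ j := by simp [sublevel]

lemma sublevel_succ {N : ℕ} (O : Fin N ≃ Brick) {j : ℕ} (hj : j < N) :
    sublevel O (j + 1) = insert (O ⟨j, hj⟩) (sublevel O j) := by
  ext T
  simp only [mem_sublevel, Finset.mem_insert]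
  constructor
  · intro h
    by_cases hT : ((O.symm T : Fin N) : ℕ) + 1 ≤ j
    · exact Or.inr hT
    · have hv : ((O.symm T : Fin N) : ℕ) = j := by omega
      exact Or.inl ((Equiv.symm_apply_eq O).1 (Fin.ext hv))
  · rintro (h | h)
    · rw [h, Equiv.symm_apply_apply]
    · omega

lemma brick_not_mem {N : ℕ} (O : Fin N ≃ Brick) {j : ℕ} (hj : j < N) :
    O ⟨j, hj⟩ ∉ sublevel O j := by
  simp [mem_sublevel, Equiv.symm_apply_apply]

lemma mem_levelSurf {N : ℕ} {O : Fin N ≃ Brick} {j : ℕ} {f : Facet} :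
    f ∈ levelSurf bricksOf O j ↔
      (∃ T ∈ bricksOf f, T ∈ sublevel O j) ∧ ∃ T ∈ bricksOf f, T ∉ sublevel O j := by
  simp [levelSurf]

lemma mem_intFacets {f : Facet} {A : Brick} :
    f ∈ intFacets bricksOf A ↔ A ∈ bricksOf f ∧ (bricksOf f).card = 2 := by
  simp [intFacets]

set_option maxHeartbeats 1000000 in
lemma surf_succ (hBC : ∀ f, (bricksOf f).card = 1 ∨ (bricksOf f).card = 2)
    {N : ℕ} (O : Fin N ≃ Brick) {j : ℕ} (hj : j < N) :
    levelSurf bricksOf O (j + 1) = levelSurf bricksOf O j ∆ intFacets bricksOf (O ⟨j, hj⟩) := by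
  ext f
  rw [Finset.mem_symmDiff, mem_levelSurf, mem_levelSurf, mem_intFacets]
  have hT0 : O ⟨j, hj⟩ ∉ sublevel O j := brick_not_mem O hj
  have hsucc : ∀ T : Brick, T ∈ sublevel O (j + 1) ↔ T = O ⟨j, hj⟩ ∨ T ∈ sublevel O j := by
    intro T; rw [sublevel_succ O hj]; simp
  rcases hBC f with h1 | h2
  · obtain ⟨X, hX⟩ := Finset.card_eq_one.1 h1
    have hc : (bricksOf f).card = 1 := h1
    simp only [hX, Finset.mem_singleton, forall_eq, exists_eq_left, hsucc]
    rw [Finset.card_singleton]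
    by_cases hXT : X = O ⟨j, hj⟩ <;> simp [hXT, hT0] <;> tauto
  · obtain ⟨X, Y, hXY, hXYeq⟩ := Finset.card_eq_two.1 h2
    have hmem : ∀ P : Brick → Prop, (∃ T ∈ bricksOf f, P T) ↔ P X ∨ P Y := by
      intro P; rw [hXYeq]; simp
    have hint : (O ⟨j, hj⟩ ∈ bricksOf f ∧ (bricksOf f).card = 2)
        ↔ (O ⟨j, hj⟩ = X ∨ O ⟨j, hj⟩ = Y) := by
      rw [and_iff_left h2, hXYeq, Finset.mem_insert, Finset.mem_singleton]
    simp only [hmem, hint, hsucc]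
    clear hmem hint hsucc hXYeq hBC
    by_cases hTX : O ⟨j, hj⟩ = X
    · subst hTX
      have hYX : ¬ (Y = O ⟨j, hj⟩) := fun h => hXY h.symm
      tauto
    · by_cases hTY : O ⟨j, hj⟩ = Y
      · subst hTY
        have hXX : ¬ (X = O ⟨j, hj⟩) := fun h => hXY h
        tauto
      · have hx1 : ¬ (X = O ⟨j, hj⟩) := fun h => hTX h.symm
        have hx2 : ¬ (Y = O ⟨j, hj⟩) := fun h => hTY h.symm
        tauto

lemma Lam_succ (hBC : ∀ f, (bricksOf f).card = 1 ∨ (bricksOf f).card = 2)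
    {N : ℕ} (O : Fin N ≃ Brick) {j : ℕ} (hj : j < N) :
    Lam ω bricksOf O (j + 1) = Lam ω bricksOf O j
      + strength ω (intFacets bricksOf (O ⟨j, hj⟩)) (levelSurf bricksOf O j) := by
  rw [Lam, Lam, surf_succ bricksOf hBC O hj, wt_symmDiff]

lemma strength_symmDiff_self (A S : Finset Facet) :
    strength ω A (S ∆ A) = - strength ω A S := by
  have h1 : A ∩ (S ∆ A) = A \ S := by
    ext x; simp only [Finset.mem_inter, Finset.mem_symmDiff, Finset.mem_sdiff]; tauto
  have h2 : A \ (S ∆ A) = A ∩ S := by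
    ext x; simp only [Finset.mem_inter, Finset.mem_symmDiff, Finset.mem_sdiff]; tauto
  rw [strength, strength, h1, h2]; ring

lemma strength_symmDiff_other (A B S : Finset Facet) (h : ∀ f, f ∈ B → f ∉ A) :
    strength ω B (S ∆ A) = strength ω B S := by
  have h1 : B ∩ (S ∆ A) = B ∩ S := by
    ext x
    simp only [Finset.mem_inter, Finset.mem_symmDiff, Finset.mem_sdiff]
    by_cases hxB : x ∈ B
    · have := h x hxB; tauto
    · tauto
  have h2 : B \ (S ∆ A) = B \ S := by
    ext x
    simp only [Finset.mem_sdiff, Finset.mem_symmDiff]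
    by_cases hxB : x ∈ B
    · have := h x hxB; tauto
    · tauto
  rw [strength, strength, h1, h2]

lemma sublevel_swap {N : ℕ} (O : Fin N ≃ Brick) (i : Fin N) (hi : (i : ℕ) + 1 < N)
    (O' : Fin N ≃ Brick) (hO' : O' = (Equiv.swap i ⟨(i : ℕ) + 1, hi⟩).trans O)
    {j : ℕ} (hj : j ≠ (i : ℕ) + 1) : sublevel O' j = sublevel O j := by
  subst hO'
  ext T
  simp only [mem_sublevel, Equiv.symm_trans_apply, Equiv.symm_swap]
  rcases eq_or_ne (O.symm T) i with hx | hx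
  · rw [hx, Equiv.swap_apply_left]
    show ((⟨(i : ℕ) + 1, hi⟩ : Fin N) : ℕ) + 1 ≤ j ↔ (i : ℕ) + 1 ≤ j
    simp only []
    omega
  · rcases eq_or_ne (O.symm T) ⟨(i : ℕ) + 1, hi⟩ with hx' | hx'
    · rw [hx', Equiv.swap_apply_right]
      show (i : ℕ) + 1 ≤ j ↔ ((⟨(i : ℕ) + 1, hi⟩ : Fin N) : ℕ) + 1 ≤ j
      simp only []
      omega
    · rw [Equiv.swap_apply_of_ne_of_ne hx hx']

lemma surf_swap {N : ℕ} (O : Fin N ≃ Brick) (i : Fin N) (hi : (i : ℕ) + 1 < N)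
    (O' : Fin N ≃ Brick) (hO' : O' = (Equiv.swap i ⟨(i : ℕ) + 1, hi⟩).trans O)
    {j : ℕ} (hj : j ≠ (i : ℕ) + 1) :
    levelSurf bricksOf O' j = levelSurf bricksOf O j := by
  unfold levelSurf
  simp only [sublevel_swap O i hi O' hO' hj]

end Geometry

/-- if A = O⁻¹(i) and B = O⁻¹(i+1) are both shortening moves for the level
surface S_i which share no facets, then swapping them does not increase width. -/
theorem stmt8 {Brick Facet : Type} [Fintype Brick] [DecidableEq Brick]
    [Fintype Facet] [DecidableEq Facet]
    (ω : Facet → ℝ) (hω : ∀ f, 0 ≤ ω f)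
    (bricksOf : Facet → Finset Brick)
    (hBC : ∀ f, (bricksOf f).card = 1 ∨ (bricksOf f).card = 2)
    {N : ℕ} (O : Fin N ≃ Brick) (i : Fin N) (hi : (i : ℕ) + 1 < N)
    (O' : Fin N ≃ Brick) (hO' : O' = (Equiv.swap i ⟨(i : ℕ) + 1, hi⟩).trans O)
    (hshortA : ShortMove ω (intFacets bricksOf (O i)) (levelSurf bricksOf O ((i : ℕ) + 1)))
    (hshortB : ShortMove ω (intFacets bricksOf (O ⟨(i : ℕ) + 1, hi⟩))
      (levelSurf bricksOf O ((i : ℕ) + 1)))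
    (hdisj : commonFacets bricksOf (O i) (O ⟨(i : ℕ) + 1, hi⟩) = ∅) :
    WidthLE (widthList N (Lam ω bricksOf O')) (widthList N (Lam ω bricksOf O)) := by
  have hi0 : (i : ℕ) < N := i.isLt
  set A := intFacets bricksOf (O i) with hA
  set B := intFacets bricksOf (O ⟨(i : ℕ) + 1, hi⟩) with hB
  set S := levelSurf bricksOf O (i : ℕ) with hS
  have hAB : ∀ f, f ∈ B → f ∉ A := by
    intro f hfB hfA
    have hmem : f ∈ commonFacets bricksOf (O i) (O ⟨(i : ℕ) + 1, hi⟩) := by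
      rw [commonFacets, Finset.mem_filter]
      exact ⟨Finset.mem_univ f, (mem_intFacets bricksOf).1 hfA |>.1,
        (mem_intFacets bricksOf).1 hfB |>.1⟩
    rw [hdisj] at hmem
    exact absurd hmem (Finset.notMem_empty f)
  have hOi : (⟨(i : ℕ), hi0⟩ : Fin N) = i := Fin.eta i hi0
  have step1 : Lam ω bricksOf O ((i : ℕ) + 1) = Lam ω bricksOf O (i : ℕ) + strength ω A S := by
    have h := Lam_succ ω bricksOf hBC O hi0
    rw [hOi] at h
    exact h
  have hsurf1 : levelSurf bricksOf O ((i : ℕ) + 1) = S ∆ A := by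
    have h := surf_succ bricksOf hBC O hi0
    rw [hOi] at h
    exact h
  have hpA : 0 ≤ strength ω A S := by
    have h := hshortA.2
    rw [hsurf1, strength_symmDiff_self] at h
    linarith
  have hsB : strength ω B S ≤ 0 := by
    have h := hshortB.2
    rw [hsurf1, strength_symmDiff_other ω A B S hAB] at h
    exact h
  have step2 : Lam ω bricksOf O ((i : ℕ) + 1 + 1)
      = Lam ω bricksOf O ((i : ℕ) + 1) + strength ω B (S ∆ A) := by
    have h := Lam_succ ω bricksOf hBC O hi
    rw [hsurf1] at h
    exact h
  have hO'i : O' (⟨(i : ℕ), hi0⟩ : Fin N) = O ⟨(i : ℕ) + 1, hi⟩ := by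
    rw [hO', hOi, Equiv.trans_apply, Equiv.swap_apply_left]
  have hSurfO' : levelSurf bricksOf O' (i : ℕ) = S :=
    surf_swap bricksOf O i hi O' hO' (by omega)
  have step1' : Lam ω bricksOf O' ((i : ℕ) + 1)
      = Lam ω bricksOf O (i : ℕ) + strength ω B S := by
    have h := Lam_succ ω bricksOf hBC O' hi0
    rw [hO'i, hSurfO'] at h
    rw [h, Lam, Lam, hSurfO']
  apply width_key N ((i : ℕ) + 1) (Lam ω bricksOf O) (Lam ω bricksOf O') (by omega) (by omega)
    ?_ (strength ω A S) (strength ω B S) hpA hsB ?_ ?_ ?_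
  · intro j hj
    rw [Lam, Lam, surf_swap bricksOf O i hi O' hO' hj]
  · simp only [Nat.add_sub_cancel]
    exact step1
  · simp only [Nat.add_sub_cancel]
    exact step1'
  · simp only [Nat.add_sub_cancel]
    rw [step2, step1, strength_symmDiff_other ω A B S hAB]
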